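/- arXiv:2308.08636 — 2 statements merged into one kernel-verified Lean document; each statement's English description precedes it below -/
import Mathlib

section
/- Existence of entropy and temperature (forward direction): Let Σ be a nonempty compact Hausdorff space and let 𝒫 ⊆ M°(Σ) × M(Σ) be such that the closure of Cone(𝒫) is convex and meets (0, M₊(Σ)) only in (0,0). Then there exist a continuous function η : Σ → ℝ and a continuous function T : Σ → ℝ with T > 0 everywhere, such that for every (Δm, q) ∈ 𝒫, ∫_Σ η d(Δm) ≥ ∫_Σ (1/T) dq. -/
open Filter Set Topology

noncomputable instance weakDualLCS {E : Type*} [NormedAddCommGroup E] [NormedSpace ℝ E] :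
    LocallyConvexSpace ℝ (WeakDual ℝ E) :=
  WeakBilin.locallyConvexSpace (B := topDualPairing ℝ E)

lemma weakdual_dual_eval {E : Type*} [NormedAddCommGroup E] [NormedSpace ℝ E]
    (F : WeakDual ℝ E →L[ℝ] ℝ) : ∃ x : E, ∀ φ : WeakDual ℝ E, F φ = φ x := by
  -- F⁻¹ (Ioo (-1) 1) is a neighborhood of 0
  have hU : F ⁻¹' (Set.Ioo (-1 : ℝ) 1) ∈ 𝓝 (0 : WeakDual ℝ E) := by
    refine F.continuous.continuousAt.preimage_mem_nhds ?_
    simp only [map_zero]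
    exact Ioo_mem_nhds (by norm_num) (by norm_num)
  -- topology is induced by coeFn into E → ℝ
  rw [show (𝓝 (0 : WeakDual ℝ E)) = Filter.comap (fun (φ : WeakDual ℝ E) (x : E) => φ x)
      (𝓝 (fun _ => 0 : E → ℝ)) from nhds_induced _ 0, nhds_pi] at hU
  obtain ⟨s, hs, hsub⟩ := Filter.mem_comap.1 hU
  obtain ⟨I, hIfin, t, ht, hIt⟩ := Filter.mem_pi.1 hs
  -- if φ vanishes on I then F φ = 0
  have hker : ∀ φ : WeakDual ℝ E, (∀ x ∈ I, φ x = 0) → F φ = 0 := by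
    intro φ hφ
    by_contra hne
    have key : ∀ c : ℝ, |c * F φ| < 1 := by
      intro c
      have : (fun x => (c • φ) x) ∈ I.pi t := by
        intro x hx
        have : (c • φ) x = 0 := by
          have := hφ x hx
          show c • φ x = 0
          rw [this, smul_zero]
        show (c • φ) x ∈ t x
        rw [this]
        exact mem_of_mem_nhds (ht x)
      have h2 := hsub (hIt this)
      simp only [Set.mem_preimage, map_smul, smul_eq_mul, Set.mem_Ioo] at h2
      rw [abs_lt]; exact h2
    have := key ((2 : ℝ) / F φ)
    rw [div_mul_cancel₀ _ hne] at this
    norm_num at this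
  haveI : Finite I := hIfin.to_subtype
  haveI := hIfin.fintype
  -- evaluation functionals
  let L : I → WeakDual ℝ E →ₗ[ℝ] ℝ := fun i =>
    { toFun := fun φ => φ (i : E), map_add' := fun _ _ => rfl, map_smul' := fun _ _ => rfl }
  have hle : ⨅ i, LinearMap.ker (L i) ≤ LinearMap.ker (F : WeakDual ℝ E →ₗ[ℝ] ℝ) := by
    intro φ hφ
    simp only [Submodule.mem_iInf, LinearMap.mem_ker] at hφ ⊢
    exact hker φ fun x hx => hφ ⟨x, hx⟩
  have hspan := mem_span_of_iInf_ker_le_ker hle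
  obtain ⟨c, hc⟩ := (Submodule.mem_span_range_iff_exists_fun ℝ).1 hspan
  refine ⟨∑ i : I, c i • (i : E), fun φ => ?_⟩
  have := LinearMap.congr_fun hc φ
  simp only [LinearMap.coe_sum, Finset.sum_apply, LinearMap.smul_apply,
    LinearMap.coe_mk, AddHom.coe_mk, smul_eq_mul, ContinuousLinearMap.coe_coe, L] at this
  rw [← this, map_sum]
  simp [smul_eq_mul]
  rfl

/-- The cone generated by a set `S`: all nonnegative real multiples of members of `S`. -/
def coneOf {V : Type*} [AddCommGroup V] [Module ℝ V] [TopologicalSpace V]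
    (S : Set V) : Set V :=
  {x | ∃ α : ℝ, 0 ≤ α ∧ ∃ s ∈ S, x = α • s}

/-- Existence of entropy and thermodynamic temperature (forward direction of the
main theorem).  Measures on the compact Hausdorff state space `Σ` are represented,
via Riesz, as elements of the weak-star dual of `C(Σ,ℝ)`; a process is a pair
`(Δm, q)` with `Δm(Σ) = 0`.  If `cl(Cone(𝒫))` is convex and meets
`{0} × M₊(Σ)` only at `(0,0)` (the Kelvin-Planck condition), then there are
continuous functions `η : Σ → ℝ` and `T : Σ → ℝ`, with `T` strictly positive,
such that `∫ η d(Δm) ≥ ∫ (1/T) dq` for every process `(Δm, q) ∈ 𝒫`. -/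
theorem existence_of_entropy_and_temperature {X : Type*} [TopologicalSpace X]
    [CompactSpace X] [T2Space X] [Nonempty X]
    (P : Set (WeakDual ℝ C(X, ℝ) × WeakDual ℝ C(X, ℝ)))
    (hP0 : ∀ p ∈ P, p.1 (1 : C(X, ℝ)) = 0)
    (hconv : Convex ℝ (closure (coneOf P)))
    (hKP : ∀ x ∈ closure (coneOf P), x.1 = 0 →
      (∀ φ : C(X, ℝ), (∀ s, 0 ≤ φ s) → 0 ≤ x.2 φ) → x = 0) :
    ∃ η T Tinv : C(X, ℝ), (∀ σ, 0 < T σ) ∧ (∀ σ, Tinv σ = (T σ)⁻¹) ∧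
      ∀ p ∈ P, p.2 Tinv ≤ p.1 η := by
  classical
  rcases P.eq_empty_or_nonempty with rfl | ⟨p₀, hp₀⟩
  · exact ⟨0, 1, 1, fun σ => by simp, fun σ => by simp, fun p hp => hp.elim⟩
  let WD : Type _ := WeakDual ℝ C(X, ℝ)
  -- the set of positive normalized functionals ("probability measures")
  set S : Set WD := {φ | (∀ g : C(X, ℝ), (∀ s, 0 ≤ g s) → 0 ≤ φ g) ∧ φ (1 : C(X, ℝ)) = 1}
    with hS_def
  have hS_closed : IsClosed S := by
    have h1 : S = (⋂ g ∈ {g : C(X, ℝ) | ∀ s, 0 ≤ g s}, {φ : WD | 0 ≤ φ g}) ∩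
        {φ : WD | φ (1 : C(X, ℝ)) = 1} := by
      ext φ
      constructor
      · rintro ⟨h1, h2⟩
        exact ⟨Set.mem_iInter₂.2 fun g hg => h1 g hg, h2⟩
      · rintro ⟨h1, h2⟩
        exact ⟨fun g hg => Set.mem_iInter₂.1 h1 g hg, h2⟩
    rw [h1]
    refine IsClosed.inter ?_ (isClosed_eq (WeakDual.eval_continuous _) continuous_const)
    exact isClosed_biInter fun g _ =>
      isClosed_le continuous_const (WeakDual.eval_continuous g)
  have hS_compact : IsCompact S := by
    refine IsCompact.of_isClosed_subset
      (WeakDual.isCompact_polar ℝ (Metric.closedBall_mem_nhds (0 : C(X, ℝ)) one_pos))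
      hS_closed ?_
    intro φ hφ
    rw [WeakDual.polar_def]
    intro g hg
    rw [Metric.mem_closedBall, dist_zero_right] at hg
    have habs : ∀ s, |g s| ≤ 1 := fun s =>
      le_trans (le_of_eq (Real.norm_eq_abs (g s)).symm)
        ((ContinuousMap.norm_coe_le_norm g s).trans hg)
    have h1 : 0 ≤ φ ((1 : C(X, ℝ)) - g) := by
      refine hφ.1 _ fun s => ?_
      simp only [ContinuousMap.sub_apply, ContinuousMap.one_apply]
      linarith [(abs_le.1 (habs s)).2]
    have h2 : 0 ≤ φ ((1 : C(X, ℝ)) + g) := by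
      refine hφ.1 _ fun s => ?_
      simp only [ContinuousMap.add_apply, ContinuousMap.one_apply]
      linarith [(abs_le.1 (habs s)).1]
    rw [map_sub] at h1
    rw [map_add] at h2
    rw [hφ.2] at h1 h2
    rw [Real.norm_eq_abs, abs_le]
    constructor <;> linarith
  have hS_convex : Convex ℝ S := by
    intro φ hφ ψ hψ a b ha hb hab
    constructor
    · intro g hg
      have : (a • φ + b • ψ) g = a * φ g + b * ψ g := rfl
      rw [this]
      have := hφ.1 g hg
      have := hψ.1 g hg
      positivity
    · have : (a • φ + b • ψ) (1 : C(X, ℝ)) = a * φ 1 + b * ψ 1 := rfl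
      rw [this, hφ.2, hψ.2]
      linarith
  -- the compact convex set K = {0} × S
  set K : Set (WD × WD) := {(0 : WD)} ×ˢ S with hK_def
  have hK_compact : IsCompact K := isCompact_singleton.prod hS_compact
  have hK_convex : Convex ℝ K := (convex_singleton _).prod hS_convex
  have hK_disj : Disjoint K (closure (coneOf P)) := by
    rw [Set.disjoint_left]
    rintro ⟨x1, x2⟩ hxK hxC
    rw [hK_def, Set.mem_prod, Set.mem_singleton_iff] at hxK
    have := hKP _ hxC hxK.1 hxK.2.1
    have h2 : x2 = 0 := congrArg Prod.snd this
    have : (0 : ℝ) = 1 := by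
      rw [← hxK.2.2, h2]
      rfl
    norm_num at this
  -- separation
  obtain ⟨f, u, v, hfu, huv, hfv⟩ :=
    geometric_hahn_banach_compact_closed hK_convex hK_compact hconv isClosed_closure hK_disj
  -- 0 is in the cone
  have h0cone : (0 : WD × WD) ∈ closure (coneOf P) :=
    subset_closure ⟨0, le_refl 0, p₀, hp₀, (zero_smul ℝ p₀).symm⟩
  have hv0 : v < 0 := by
    have := hfv _ h0cone
    rwa [map_zero] at this
  -- f is nonnegative on P
  have hfP : ∀ p ∈ P, 0 ≤ f p := by
    intro p hp
    by_contra hneg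
    push_neg at hneg
    set α : ℝ := (v - 1) / f p with hα
    have hα0 : 0 ≤ α := le_of_lt (div_pos_of_neg_of_neg (by linarith) hneg)
    have hmem : α • p ∈ closure (coneOf P) := subset_closure ⟨α, hα0, p, hp, rfl⟩
    have := hfv _ hmem
    rw [map_smul, smul_eq_mul, hα, div_mul_cancel₀ _ (ne_of_lt hneg)] at this
    linarith
  -- represent f by a pair of continuous functions
  obtain ⟨g₁, hg₁⟩ := weakdual_dual_eval (f.comp (ContinuousLinearMap.inl ℝ WD WD))
  obtain ⟨g₂, hg₂⟩ := weakdual_dual_eval (f.comp (ContinuousLinearMap.inr ℝ WD WD))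
  have hf_eq : ∀ x : WD × WD, f x = x.1 g₁ + x.2 g₂ := by
    intro x
    have h1 : x = (x.1, (0 : WD)) + ((0 : WD), x.2) := by
      ext <;> simp
    have e1 := hg₁ x.1
    have e2 := hg₂ x.2
    simp only [ContinuousLinearMap.comp_apply, ContinuousLinearMap.inl_apply,
      ContinuousLinearMap.inr_apply] at e1 e2
    calc f x = f ((x.1, (0 : WD)) + ((0 : WD), x.2)) := by rw [← h1]
      _ = f (x.1, (0 : WD)) + f ((0 : WD), x.2) := map_add f _ _
      _ = x.1 g₁ + x.2 g₂ := by exact congrArg₂ (· + ·) e1 e2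
  -- Dirac measures give pointwise bounds on g₂
  have hdirac : ∀ σ : X, g₂ σ < v := by
    intro σ
    set δ : WD := ContinuousMap.evalCLM ℝ σ with hδ
    have hδS : δ ∈ S := ⟨fun g hg => hg σ, rfl⟩
    have hmemK : ((0 : WD), δ) ∈ K := ⟨rfl, hδS⟩
    have := hfu _ hmemK
    rw [hf_eq] at this
    have hz : ((0 : WD), δ).1 g₁ = 0 := rfl
    have hδg : ((0 : WD), δ).2 g₂ = g₂ σ := rfl
    rw [hz, hδg] at this
    linarith
  have hg₂neg : ∀ σ, g₂ σ < 0 := fun σ => lt_trans (hdirac σ) hv0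
  set Tinv : C(X, ℝ) := -g₂ with hTinv
  have hTinvpos : ∀ σ, 0 < Tinv σ := by
    intro σ
    have : Tinv σ = -(g₂ σ) := rfl
    rw [this]
    linarith [hg₂neg σ]
  refine ⟨g₁, ⟨fun σ => (Tinv σ)⁻¹,
      Continuous.inv₀ Tinv.continuous fun σ => ne_of_gt (hTinvpos σ)⟩, Tinv,
    fun σ => inv_pos.2 (hTinvpos σ), fun σ => (inv_inv _).symm, ?_⟩
  intro p hp
  have h0 := hfP p hp
  rw [hf_eq] at h0
  have hneg : p.2 Tinv = -(p.2 g₂) := by rw [hTinv, map_neg]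
  rw [hneg]
  linarith
end

section
/- Additivity of the closed cone generated by processes (Appendix Lemma): Let V be a real topological vector space, and let 𝒫 ⊆ V be a set with the property that every open neighborhood of any p ∈ 𝒫 contains some p* ∈ 𝒫 belonging to a distinguished subfamily 𝒫_ℚ such that n·p* ∈ 𝒫_ℚ for all positive integers n and p₁* + p₂* ∈ 𝒫 for all p₁*, p₂* ∈ 𝒫_ℚ. Then for any v₁, v₂ ∈ cl(Cone(𝒫)), the sum v₁ + v₂ belongs to cl(Cone(𝒫)). -/
/-- A positive rational equals (num.toNat * d) / (den * d) for any positive d. -/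
lemma rat_eq_div (a : ℚ) (ha : 0 < a) (d : ℕ) (hd : 0 < d) :
    (a : ℝ) = ((a.num.toNat * d : ℕ) : ℝ) / ((a.den * d : ℕ) : ℝ) := by
  have hnum : (a.num.toNat : ℚ) = (a.num : ℚ) := by
    exact_mod_cast Int.toNat_of_nonneg (le_of_lt (Rat.num_pos.mpr ha))
  have hq : ((a.num.toNat * d : ℕ) : ℚ) / ((a.den * d : ℕ) : ℚ) = a := by
    push_cast
    rw [hnum, mul_div_mul_comm, div_self (by exact_mod_cast hd.ne'), mul_one,
      Rat.num_div_den]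
  have hcast : ((((a.num.toNat * d : ℕ) : ℚ) / ((a.den * d : ℕ) : ℚ) : ℚ) : ℝ)
      = ((a.num.toNat * d : ℕ) : ℝ) / ((a.den * d : ℕ) : ℝ) := by push_cast; ring
  rw [← hcast, hq]

/-- Every real neighborhood of a positive real contains a positive rational. -/
lemma exists_pos_rat_mem {s : Set ℝ} {α : ℝ} (hα : 0 < α) (hs : s ∈ nhds α) :
    ∃ a : ℚ, 0 < a ∧ (a : ℝ) ∈ s := by
  have h : s ∩ Set.Ioi 0 ∈ nhds α := Filter.inter_mem hs (Ioi_mem_nhds hα)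
  obtain ⟨O, hOsub, hOopen, hαO⟩ := mem_nhds_iff.mp h
  obtain ⟨a, haO⟩ := Rat.denseRange_cast.exists_mem_open hOopen ⟨α, hαO⟩
  have hpos : (0 : ℝ) < (a : ℝ) := (hOsub haO).2
  exact ⟨a, by exact_mod_cast hpos, (hOsub haO).1⟩

/-- Key step: the cone of `P` is additively closed up to closure. -/
lemma cone_add_mem_closure {V : Type*} [AddCommGroup V] [Module ℝ V]
    [TopologicalSpace V] [IsTopologicalAddGroup V] [ContinuousSMul ℝ V]
    {P PQ : Set V} (hPQsub : PQ ⊆ P)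
    (hdense : ∀ p ∈ P, ∀ O : Set V, IsOpen O → p ∈ O → ∃ q ∈ PQ, q ∈ O)
    (hnat : ∀ q ∈ PQ, ∀ n : ℕ, 0 < n → (n : ℝ) • q ∈ PQ)
    (hsum : ∀ q₁ ∈ PQ, ∀ q₂ ∈ PQ, q₁ + q₂ ∈ P) :
    ∀ x ∈ coneOf P, ∀ y ∈ coneOf P, x + y ∈ closure (coneOf P) := by
  rintro x ⟨α, hα, p₁, hp₁, rfl⟩ y ⟨β, hβ, p₂, hp₂, rfl⟩
  rcases eq_or_lt_of_le hα with rfl | hαpos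
  · have h : β • p₂ ∈ coneOf P := ⟨β, hβ, p₂, hp₂, rfl⟩
    simpa using subset_closure h
  rcases eq_or_lt_of_le hβ with rfl | hβpos
  · have h : α • p₁ ∈ coneOf P := ⟨α, hα, p₁, hp₁, rfl⟩
    simpa using subset_closure h
  -- both coefficients positive
  rw [mem_closure_iff]
  intro U hU hxyU
  -- continuity of ((s,t),(u,w)) ↦ s•u + t•w
  have hcont : Continuous (fun z : (ℝ × ℝ) × (V × V) => z.1.1 • z.2.1 + z.1.2 • z.2.2) := by
    fun_prop
  have hmem : (fun z : (ℝ × ℝ) × (V × V) => z.1.1 • z.2.1 + z.1.2 • z.2.2) ⁻¹' U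
      ∈ nhds (((α, β), (p₁, p₂)) : (ℝ × ℝ) × (V × V)) :=
    hcont.continuousAt.preimage_mem_nhds (hU.mem_nhds hxyU)
  rw [mem_nhds_prod_iff] at hmem
  obtain ⟨s, hs, t, ht, hst⟩ := hmem
  rw [mem_nhds_prod_iff] at hs ht
  obtain ⟨s₁, hs₁, s₂, hs₂, hs12⟩ := hs
  obtain ⟨t₁, ht₁, t₂, ht₂, ht12⟩ := ht
  -- pick positive rationals near α, β
  obtain ⟨a, ha, has⟩ := exists_pos_rat_mem hαpos hs₁
  obtain ⟨b, hb, hbs⟩ := exists_pos_rat_mem hβpos hs₂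
  -- pick PQ members near p₁, p₂
  obtain ⟨O₁, hO₁sub, hO₁open, hp₁O⟩ := mem_nhds_iff.mp ht₁
  obtain ⟨O₂, hO₂sub, hO₂open, hp₂O⟩ := mem_nhds_iff.mp ht₂
  obtain ⟨q₁, hq₁, hq₁O⟩ := hdense p₁ hp₁ O₁ hO₁open hp₁O
  obtain ⟨q₂, hq₂, hq₂O⟩ := hdense p₂ hp₂ O₂ hO₂open hp₂O
  refine ⟨(a : ℝ) • q₁ + (b : ℝ) • q₂, ?_, ?_⟩
  · exact hst (Set.mk_mem_prod (hs12 (Set.mk_mem_prod has hbs))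
      (ht12 (Set.mk_mem_prod (hO₁sub hq₁O) (hO₂sub hq₂O))))
  -- show membership in coneOf P via common denominator
  · have hda : 0 < a.den := a.pos
    have hdb : 0 < b.den := b.pos
    have hna : 0 < a.num.toNat := by have := Rat.num_pos.mpr ha; omega
    have hnb : 0 < b.num.toNat := by have := Rat.num_pos.mpr hb; omega
    set m₁ : ℕ := a.num.toNat * b.den with hm₁
    set m₂ : ℕ := b.num.toNat * a.den with hm₂
    set n : ℕ := a.den * b.den with hn
    have hnpos : (0 : ℝ) < n := by exact_mod_cast Nat.mul_pos hda hdb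
    have hA : (a : ℝ) = (m₁ : ℝ) / (n : ℝ) := rat_eq_div a ha b.den hdb
    have hB : (b : ℝ) = (m₂ : ℝ) / (n : ℝ) := by
      have := rat_eq_div b hb a.den hda
      rw [this, hm₂, hn, Nat.mul_comm a.den b.den]
    refine ⟨1 / (n : ℝ), by positivity, (m₁ : ℝ) • q₁ + (m₂ : ℝ) • q₂,
      hsum _ (hnat q₁ hq₁ m₁ (Nat.mul_pos hna hdb)) _
        (hnat q₂ hq₂ m₂ (Nat.mul_pos hnb hda)), ?_⟩
    rw [smul_add, smul_smul, smul_smul, hA, hB]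
    ring_nf

/-- Appendix Lemma: if each process `p ∈ 𝒫` can be approximated arbitrarily well by
members of a distinguished subfamily `𝒫_ℚ ⊆ 𝒫` that is closed under multiplication
by positive integers and whose pairwise sums lie in `𝒫`, then `cl(Cone(𝒫))` is
closed under addition. -/
theorem closure_cone_processes_additive {V : Type*} [AddCommGroup V] [Module ℝ V]
    [TopologicalSpace V] [IsTopologicalAddGroup V] [ContinuousSMul ℝ V]
    {P PQ : Set V} (hPQsub : PQ ⊆ P)
    (hdense : ∀ p ∈ P, ∀ O : Set V, IsOpen O → p ∈ O → ∃ q ∈ PQ, q ∈ O)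
    (hnat : ∀ q ∈ PQ, ∀ n : ℕ, 0 < n → (n : ℝ) • q ∈ PQ)
    (hsum : ∀ q₁ ∈ PQ, ∀ q₂ ∈ PQ, q₁ + q₂ ∈ P) :
    ∀ v₁ ∈ closure (coneOf P), ∀ v₂ ∈ closure (coneOf P),
      v₁ + v₂ ∈ closure (coneOf P) := by
  intro v₁ hv₁ v₂ hv₂
  have key := cone_add_mem_closure hPQsub hdense hnat hsum
  rw [mem_closure_iff]
  intro U hU hvU
  have hcont : Continuous (fun z : V × V => z.1 + z.2) := continuous_add
  have hmem : (fun z : V × V => z.1 + z.2) ⁻¹' U ∈ nhds ((v₁, v₂) : V × V) :=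
    hcont.continuousAt.preimage_mem_nhds (hU.mem_nhds hvU)
  rw [mem_nhds_prod_iff] at hmem
  obtain ⟨s, hs, t, ht, hst⟩ := hmem
  obtain ⟨O₁, hO₁sub, hO₁open, hv₁O⟩ := mem_nhds_iff.mp hs
  obtain ⟨O₂, hO₂sub, hO₂open, hv₂O⟩ := mem_nhds_iff.mp ht
  obtain ⟨x, hxO, hx⟩ := mem_closure_iff.mp hv₁ O₁ hO₁open hv₁O
  obtain ⟨y, hyO, hy⟩ := mem_closure_iff.mp hv₂ O₂ hO₂open hv₂O
  have hxyU : x + y ∈ U := hst (Set.mk_mem_prod (hO₁sub hxO) (hO₂sub hyO))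
  obtain ⟨z, hzU, hz⟩ := mem_closure_iff.mp (key x hx y hy) U hU hxyU
  exact ⟨z, hzU, hz⟩
end
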